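/- arXiv:0902.0448 — 3 statements merged into one kernel-verified Lean document; each statement's English description precedes it below -/
import Mathlib

section
/- Under the generic condition, det K = (g+1) · p_0 · p_1 ⋯ p_{g−1}. -/
open Matrix Finset

noncomputable section

namespace TropToda

variable (g : ℕ)

/-- The summand `(1/2) m K mᵀ + m Zᵀ` in the definition of the tropical theta function. -/
def thetaTerm (K : Matrix (Fin g) (Fin g) ℝ) (m : Fin g → ℤ) (Z : Fin g → ℝ) : ℝ :=
  (1/2) * (Matrix.vecMul (fun i => (m i : ℝ)) K ⬝ᵥ fun i => (m i : ℝ))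
    + (fun i => (m i : ℝ)) ⬝ᵥ Z

/-- The tropical Riemann theta function associated with `K`. -/
def theta (K : Matrix (Fin g) (Fin g) ℝ) (Z : Fin g → ℝ) : ℝ :=
  sInf (Set.range fun m : Fin g → ℤ => thetaTerm g K m Z)

/-- The fundamental region `D_m`. -/
def Dset (K : Matrix (Fin g) (Fin g) ℝ) (m : Fin g → ℤ) : Set (Fin g → ℝ) :=
  {Z | theta g K Z = thetaTerm g K m Z}

/-- The generic condition on `C = (C_{-1}, C_0, …, C_g)`. -/
def Generic (C : ℤ → ℝ) : Prop :=
  C (-1) > 2 * C 0 ∧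
  (∀ i : ℤ, 0 ≤ i → i ≤ (g : ℤ) - 2 → C i + C (i + 2) > 2 * C (i + 1)) ∧
  C ((g : ℤ) - 1) > 2 * C (g : ℤ)

/-- `L = C_{-1} − 2(g+1) C_g`. -/
def Lc (C : ℤ → ℝ) : ℝ := C (-1) - 2 * (g + 1) * C (g : ℤ)

/-- `λ_0 = C_g`, `λ_i = C_{g−i} − C_{g−i+1}` for `1 ≤ i ≤ g`. -/
def lam (C : ℤ → ℝ) (i : ℕ) : ℝ :=
  if i = 0 then C (g : ℤ) else C ((g : ℤ) - i) - C ((g : ℤ) - i + 1)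

/-- `p_0 = L`, `p_i = L − 2 ∑_{j=1}^g min(λ_i − λ_0, λ_j − λ_0)`. -/
def pc (C : ℤ → ℝ) (i : ℕ) : ℝ :=
  if i = 0 then Lc g C
  else Lc g C - 2 * ∑ j ∈ Finset.Icc 1 g,
    min (lam g C i - lam g C 0) (lam g C j - lam g C 0)

/-- The tridiagonal period matrix `K` (0-based index `a` corresponds to the paper's `a+1`). -/
def Kmat (C : ℤ → ℝ) : Matrix (Fin g) (Fin g) ℝ := fun a b =>
  if a = b then
    pc g C (a : ℕ) + pc g C ((a : ℕ) + 1) + 2 * (lam g C ((a : ℕ) + 1) - lam g C (a : ℕ))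
  else if (a : ℕ) + 1 = (b : ℕ) then -(pc g C ((a : ℕ) + 1))
  else if (b : ℕ) + 1 = (a : ℕ) then -(pc g C ((b : ℕ) + 1))
  else 0

/-- The first standard basis (row) vector `e_1`. -/
def e1 : Fin g → ℝ := fun i => if (i : ℕ) = 0 then 1 else 0

/-- `λ⃗ = (λ_1 − λ_0, …, λ_g − λ_{g−1})`. -/
def lamvec (C : ℤ → ℝ) : Fin g → ℝ := fun i => lam g C ((i : ℕ) + 1) - lam g C (i : ℕ)

/-- `Z_n^t = Z_0 − nL e_1 + t λ⃗`. -/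
def Zpt (C : ℤ → ℝ) (Z0 : Fin g → ℝ) (n t : ℤ) : Fin g → ℝ :=
  fun i => Z0 i - (n : ℝ) * Lc g C * e1 g i + (t : ℝ) * lamvec g C i

/-- `T_n^t = Θ(Z_n^t)`. -/
def Tf (C : ℤ → ℝ) (Z0 : Fin g → ℝ) (n t : ℤ) : ℝ :=
  theta g (Kmat g C) (Zpt g C Z0 n t)

/-- `Q_n^t = T_{n−1}^t + T_n^{t+1} − T_{n−1}^{t+1} − T_n^t + C_g`. -/
def Qf (C : ℤ → ℝ) (Z0 : Fin g → ℝ) (n t : ℤ) : ℝ :=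
  Tf g C Z0 (n - 1) t + Tf g C Z0 n (t + 1) - Tf g C Z0 (n - 1) (t + 1)
    - Tf g C Z0 n t + C (g : ℤ)

/-- `W_n^t = L + T_{n−1}^{t+1} + T_{n+1}^t − T_n^t − T_n^{t+1} + C_g`. -/
def Wf (C : ℤ → ℝ) (Z0 : Fin g → ℝ) (n t : ℤ) : ℝ :=
  Lc g C + Tf g C Z0 (n - 1) (t + 1) + Tf g C Z0 (n + 1) t - Tf g C Z0 n t
    - Tf g C Z0 n (t + 1) + C (g : ℤ)

/-- `σ_t ∘ ι_t : ℝ^g → ℝ^{2(g+1)}`, recording `(Q_n^t, W_n^t)_{n ∈ ℤ/(g+1)ℤ}`. -/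
def sigmaIota (C : ℤ → ℝ) (t : ℤ) (Z0 : Fin g → ℝ) :
    (ZMod (g + 1) → ℝ) × (ZMod (g + 1) → ℝ) :=
  (fun n => Qf g C Z0 (n.val : ℤ) t, fun n => Wf g C Z0 (n.val : ℤ) t)

/-- The tridiagonal matrix `J` with `2` on the diagonal and `−1` off it. -/
def Jmat : Matrix (Fin g) (Fin g) ℝ := fun a b =>
  if a = b then 2
  else if (a : ℕ) + 1 = (b : ℕ) then -1
  else if (b : ℕ) + 1 = (a : ℕ) then -1
  else 0

/-- `X_n = min_{k=0,…,g} ∑_{l=1}^k (W_{n−l} − Q_{n−l})`, indices mod `g+1`. -/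
def todaX (Q W : ZMod (g + 1) → ℝ) (n : ZMod (g + 1)) : ℝ :=
  ⨅ k : Fin (g + 1), ∑ l ∈ Finset.Icc 1 (k : ℕ),
    (W (n - (l : ZMod (g + 1))) - Q (n - (l : ZMod (g + 1))))

/-- The ultra-discrete periodic Toda evolution map. -/
def todaMap (QW : (ZMod (g + 1) → ℝ) × (ZMod (g + 1) → ℝ)) :
    (ZMod (g + 1) → ℝ) × (ZMod (g + 1) → ℝ) :=
  (fun n => min (QW.2 n) (QW.1 n - todaX g QW.1 QW.2 n),
   fun n => QW.1 (n + 1) + QW.2 n - min (QW.2 n) (QW.1 n - todaX g QW.1 QW.2 n))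

/-- `Z̃_n^t = Z_{n_0}^0 − (n − n_0)(L + δ) e_1 + t λ⃗`. -/
def Ztil (C : ℤ → ℝ) (Z0 : Fin g → ℝ) (n0 : ℤ) (δ : ℝ) (n t : ℤ) : Fin g → ℝ :=
  fun i => Zpt g C Z0 n0 0 i - ((n : ℝ) - (n0 : ℝ)) * (Lc g C + δ) * e1 g i
    + (t : ℝ) * lamvec g C i

/-- The theta function `Θ̃` associated with `K̃ = K + δJ`. -/
def thetaTil (C : ℤ → ℝ) (δ : ℝ) (Z : Fin g → ℝ) : ℝ :=
  theta g (Kmat g C + δ • Jmat g) Z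

/-- `Q̃_n`. -/
def Qtil (C : ℤ → ℝ) (Z0 : Fin g → ℝ) (n0 : ℤ) (δ : ℝ) (n : ℤ) : ℝ :=
  thetaTil g C δ (Ztil g C Z0 n0 δ (n - 1) 0) + thetaTil g C δ (Ztil g C Z0 n0 δ n 1)
    - thetaTil g C δ (Ztil g C Z0 n0 δ (n - 1) 1) - thetaTil g C δ (Ztil g C Z0 n0 δ n 0)

/-- `W̃_n`. -/
def Wtil (C : ℤ → ℝ) (Z0 : Fin g → ℝ) (n0 : ℤ) (δ : ℝ) (n : ℤ) : ℝ :=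
  (Lc g C + δ) + thetaTil g C δ (Ztil g C Z0 n0 δ (n - 1) 1)
    + thetaTil g C δ (Ztil g C Z0 n0 δ (n + 1) 0)
    - thetaTil g C δ (Ztil g C Z0 n0 δ n 0) - thetaTil g C δ (Ztil g C Z0 n0 δ n 1)

end TropToda

/-- general real tridiagonal matrix -/
def triMat (d e : ℕ → ℝ) (n : ℕ) : Matrix (Fin n) (Fin n) ℝ := fun a b =>
  if (a : ℕ) = (b : ℕ) then d (a : ℕ)
  else if (a : ℕ) + 1 = (b : ℕ) then e (a : ℕ)
  else if (b : ℕ) + 1 = (a : ℕ) then e (b : ℕ)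
  else 0

def triDet (d e : ℕ → ℝ) : ℕ → ℝ
  | 0 => 1
  | 1 => d 0
  | (n+2) => d (n+1) * triDet d e (n+1) - e n ^ 2 * triDet d e n

lemma triMat_val (d e : ℕ → ℝ) (n : ℕ) (a b : Fin n) :
    triMat d e n a b =
      if (a : ℕ) = (b : ℕ) then d (a : ℕ)
      else if (a : ℕ) + 1 = (b : ℕ) then e (a : ℕ)
      else if (b : ℕ) + 1 = (a : ℕ) then e (b : ℕ)
      else 0 := rfl

lemma det_triMat (d e : ℕ → ℝ) : ∀ n, (triMat d e n).det = triDet d e n := by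
  intro n
  induction n using Nat.twoStepInduction with
  | zero => simp [triDet, Matrix.det_fin_zero]
  | one => simp [triDet, Matrix.det_fin_one, triMat]
  | more n ih ih1 =>
    have hc : ∀ j : Fin (n+1),
        ((((Fin.last n).castSucc).succAbove j : Fin (n+2)) : ℕ)
          = if (j : ℕ) < n then (j : ℕ) else (j : ℕ) + 1 := by
      intro j
      rcases lt_or_ge (j : ℕ) n with h | h
      · rw [Fin.succAbove_of_castSucc_lt, if_pos h]
        · rfl
        · simp [Fin.lt_def, h]
      · rw [Fin.succAbove_of_le_castSucc, if_neg (not_lt.mpr h)]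
        · rfl
        · simp [Fin.le_def, h]
    have hrow : ∀ j : Fin (n+1),
        (((Fin.last (n+1)).succAbove j : Fin (n+2)) : ℕ) = (j : ℕ) := by
      intro j; rw [Fin.succAbove_last]; rfl
    rw [Matrix.det_succ_row (triMat d e (n+2)) (Fin.last (n+1))]
    rw [Fin.sum_univ_castSucc, Fin.sum_univ_castSucc]
    have hz : ∀ j : Fin n, j ∈ Finset.univ →
        (-1 : ℝ) ^ ((Fin.last (n+1) : ℕ) + ((j.castSucc.castSucc : Fin (n+2)) : ℕ))
          * triMat d e (n+2) (Fin.last (n+1)) j.castSucc.castSucc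
          * ((triMat d e (n+2)).submatrix (Fin.last (n+1)).succAbove
              (j.castSucc.castSucc).succAbove).det = 0 := by
      intro j _
      have : triMat d e (n+2) (Fin.last (n+1)) j.castSucc.castSucc = 0 := by
        rw [triMat_val]
        have hj : (j : ℕ) < n := j.isLt
        split_ifs with h1 h2 h3 <;> simp_all <;> omega
      rw [this]; ring
    rw [Finset.sum_eq_zero hz, zero_add]
    -- last (diagonal) term
    have hdiag : triMat d e (n+2) (Fin.last (n+1)) (Fin.last (n+1)) = d (n+1) := by
      rw [triMat_val]; simp
    have hsub1 : (triMat d e (n+2)).submatrix (Fin.last (n+1)).succAbove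
        (Fin.last (n+1)).succAbove = triMat d e (n+1) := by
      ext i j
      rw [Matrix.submatrix_apply, triMat_val, triMat_val, hrow, hrow]
    -- middle term
    have hmidc : (((Fin.last n).castSucc : Fin (n+2)) : ℕ) = n := rfl
    have hmid_entry : triMat d e (n+2) (Fin.last (n+1)) (Fin.last n).castSucc = e n := by
      rw [triMat_val]
      have h1 : ((Fin.last (n+1) : Fin (n+2)) : ℕ) = n + 1 := rfl
      rw [h1, hmidc]
      split_ifs with a b c <;> first | rfl | omega
    set M2 := (triMat d e (n+2)).submatrix (Fin.last (n+1)).succAbove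
        ((Fin.last n).castSucc).succAbove with hM2
    have hM2det : M2.det = e n * triDet d e n := by
      rw [Matrix.det_succ_column M2 (Fin.last n)]
      rw [Fin.sum_univ_castSucc]
      have hz2 : ∀ i : Fin n, i ∈ Finset.univ →
          (-1 : ℝ) ^ (((i.castSucc : Fin (n+1)) : ℕ) + ((Fin.last n : Fin (n+1)) : ℕ))
            * M2 i.castSucc (Fin.last n)
            * (M2.submatrix (i.castSucc).succAbove (Fin.last n).succAbove).det = 0 := by
        intro i _
        have : M2 i.castSucc (Fin.last n) = 0 := by
          rw [hM2, Matrix.submatrix_apply, triMat_val, hrow, hc]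
          have hi : (i : ℕ) < n := i.isLt
          have hl : ((Fin.last n : Fin (n+1)) : ℕ) = n := rfl
          rw [hl]
          simp only [lt_irrefl n, if_false]
          have hcs : ((i.castSucc : Fin (n+1)) : ℕ) = (i : ℕ) := rfl
          rw [hcs]
          split_ifs <;> first | rfl | omega
        rw [this]; ring
      rw [Finset.sum_eq_zero hz2, zero_add]
      have hentry2 : M2 (Fin.last n) (Fin.last n) = e n := by
        rw [hM2, Matrix.submatrix_apply, triMat_val, hrow, hc]
        simp
      have hsub2 : M2.submatrix (Fin.last n).succAbove (Fin.last n).succAbove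
          = triMat d e n := by
        ext i j
        rw [Matrix.submatrix_apply, hM2, Matrix.submatrix_apply, triMat_val, triMat_val,
          hrow, Fin.succAbove_last, hc]
        have hcs : ((Fin.castSucc i : Fin (n+1)) : ℕ) = (i : ℕ) := rfl
        have hcs' : ((Fin.castSucc j : Fin (n+1)) : ℕ) = (j : ℕ) := rfl
        rw [hcs, hcs', if_pos (j.isLt)]
      rw [hentry2, hsub2, ih]
      have hl : ((Fin.last n : Fin (n+1)) : ℕ) = n := rfl
      have hev : ((-1 : ℝ)) ^ (n + n) = 1 := Even.neg_one_pow ⟨n, rfl⟩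
      rw [hl, hev]
      ring
    rw [hdiag, hsub1, ih1, hmid_entry, hM2det]
    have h1 : ((Fin.last (n+1) : Fin (n+2)) : ℕ) = n + 1 := rfl
    rw [h1, hmidc]
    have hev : ((-1 : ℝ)) ^ (n + 1 + (n + 1)) = 1 := Even.neg_one_pow ⟨n + 1, rfl⟩
    have hod : ((-1 : ℝ)) ^ (n + 1 + n) = -1 := Odd.neg_one_pow ⟨n, by ring⟩
    rw [hev, hod]
    show _ = triDet d e (n+2)
    simp only [triDet]
    ring

/-- auxiliary sequence -/
def Tseq (g : ℕ) (p : ℕ → ℝ) : ℕ → ℝ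
  | 0 => 0
  | (k+1) => p k * Tseq g p k
      + ((g : ℝ) + 1) / (((g : ℝ) - k) * ((g : ℝ) - k + 1)) * ∏ i ∈ range k, p i

lemma triDet_closed (g : ℕ) (d e p : ℕ → ℝ)
    (hd : ∀ k < g, ((g : ℝ) - k) * d k
      = ((g : ℝ) - k) * (p k + p (k+1)) + p k - p (k+1))
    (he : ∀ k, e k ^ 2 = p (k+1) ^ 2) :
    ∀ k ≤ g, triDet d e k
      = ((g : ℝ) + 1) / ((g : ℝ) - k + 1) * ∏ i ∈ range k, p i
        + ((g : ℝ) - k) * p k * Tseq g p k := by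
  intro k
  induction k using Nat.twoStepInduction with
  | zero =>
    intro _
    simp [triDet, Tseq]
    rw [div_self (by positivity)]
  | one =>
    intro h1
    have hg : (1:ℝ) ≤ (g:ℝ) := by exact_mod_cast h1
    have hg0 : (g:ℝ) ≠ 0 := by linarith
    have hg1 : (g:ℝ) + 1 ≠ 0 := by linarith
    have h := hd 0 h1
    simp only [Nat.cast_zero, sub_zero] at h
    simp only [triDet, Tseq, Nat.cast_zero, sub_zero, Nat.cast_one,
      Finset.prod_range_zero, Finset.prod_range_one, mul_one]
    field_simp
    ring_nf at h ⊢
    have hinv : (g:ℝ) * (g:ℝ)⁻¹ = 1 := mul_inv_cancel₀ hg0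
    linear_combination h - (p 0 + (g:ℝ) * p 0) * hinv
  | more k ih ih1 =>
    intro h2
    have hk2 : (k : ℝ) + 2 ≤ (g : ℝ) := by exact_mod_cast h2
    have ha : (g : ℝ) - k ≠ 0 := by linarith
    have hb : (g : ℝ) - k + 1 ≠ 0 := by linarith
    have hc : (g : ℝ) - k - 1 ≠ 0 := by linarith
    have hIH := ih (by omega)
    have hIH1 := ih1 (by omega)
    have hdk := hd (k+1) (by omega)
    have hek := he k
    have hcast : ((k+1 : ℕ) : ℝ) = (k : ℝ) + 1 := by push_cast; ring
    have hcast2 : ((k+2 : ℕ) : ℝ) = (k : ℝ) + 2 := by push_cast; ring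
    rw [hcast] at hdk hIH1
    -- unfold things
    have hT1 : Tseq g p (k+1) = p k * Tseq g p k
        + ((g : ℝ) + 1) / (((g : ℝ) - k) * ((g : ℝ) - k + 1)) * ∏ i ∈ range k, p i := rfl
    have hT2 : Tseq g p (k+2) = p (k+1) * Tseq g p (k+1)
        + ((g : ℝ) + 1) / (((g : ℝ) - ((k:ℝ)+1)) * ((g : ℝ) - ((k:ℝ)+1) + 1))
          * ∏ i ∈ range (k+1), p i := by
      show Tseq g p ((k+1)+1) = _
      rw [Tseq, hcast]
    have hP1 : ∏ i ∈ range (k+1), p i = (∏ i ∈ range k, p i) * p k :=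
      Finset.prod_range_succ p k
    have hP2 : ∏ i ∈ range (k+2), p i = (∏ i ∈ range k, p i) * p k * p (k+1) := by
      rw [Finset.prod_range_succ, hP1]
    have hdk' : d (k+1) = (((g : ℝ) - ((k:ℝ)+1)) * (p (k+1) + p (k+2))
        + p (k+1) - p (k+2)) / ((g : ℝ) - ((k:ℝ)+1)) := by
      rw [eq_div_iff (by intro h; apply hc; linarith)]
      linarith [hdk]
    show triDet d e (k+2) = _
    rw [triDet, hIH, hIH1, hdk', hek, hT2, hT1, hP2, hP1, hcast2]
    have h3 : (g:ℝ) - ((k:ℝ)+1) = (g:ℝ) - k - 1 := by ring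
    have h4 : (g:ℝ) - ((k:ℝ)+1) + 1 = (g:ℝ) - k := by ring
    have h5 : (g:ℝ) - ((k:ℝ)+2) = (g:ℝ) - k - 2 := by ring
    have h6 : (g:ℝ) - ((k:ℝ)+2) + 1 = (g:ℝ) - k - 1 := by ring
    rw [h3, h5]
    obtain ⟨Q, hQ⟩ : ∃ Q, ∏ i ∈ range k, p i = Q := ⟨_, rfl⟩
    obtain ⟨t, htq⟩ : ∃ t, Tseq g p k = t := ⟨_, rfl⟩
    rw [hQ, htq]
    generalize hr : (g:ℝ) - (k:ℝ) = r at *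
    have h7 : r - 1 + 1 ≠ 0 := by intro h; apply ha; linarith
    have h8 : r - 2 + 1 ≠ 0 := by intro h; apply hc; linarith
    field_simp
    ring

section DetKmatAux

open TropToda

variable (g : ℕ) (C : ℤ → ℝ)

lemma lam_succ_lt (hC : Generic g C) : ∀ i, i < g → lam g C i < lam g C (i+1) := by
  intro i hi
  obtain ⟨h1, h2, h3⟩ := hC
  have hig : (i : ℤ) < (g : ℤ) := by exact_mod_cast hi
  rcases Nat.eq_zero_or_pos i with rfl | hpos
  · have e1 : (g : ℤ) - 1 + 1 = (g : ℤ) := by ring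
    norm_num [lam]
    linarith [h3]
  · have hb1 : (0 : ℤ) ≤ (g : ℤ) - i - 1 := by omega
    have hb2 : (g : ℤ) - i - 1 ≤ (g : ℤ) - 2 := by
      have : (1 : ℤ) ≤ (i : ℤ) := by exact_mod_cast hpos
      omega
    have h := h2 ((g : ℤ) - i - 1) hb1 hb2
    have e1 : (g : ℤ) - i - 1 + 2 = (g : ℤ) - i + 1 := by ring
    have e2 : (g : ℤ) - i - 1 + 1 = (g : ℤ) - i := by ring
    rw [e1, e2] at h
    simp only [lam]
    rw [if_neg (show i ≠ 0 by omega), if_neg (show i + 1 ≠ 0 by omega)]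
    have e3 : ((i + 1 : ℕ) : ℤ) = (i : ℤ) + 1 := by push_cast; ring
    rw [e3]
    have e4 : (g : ℤ) - ((i : ℤ) + 1) = (g : ℤ) - i - 1 := by ring
    rw [e4, e2]
    linarith

lemma lam_mono (hC : Generic g C) : ∀ i j, i ≤ j → j ≤ g → lam g C i ≤ lam g C j := by
  intro i j hij hj
  induction j with
  | zero =>
    have : i = 0 := Nat.le_zero.mp hij
    simp [this]
  | succ n ihn =>
    rcases Nat.eq_or_lt_of_le hij with rfl | h
    · exact le_rfl
    · exact le_trans (ihn (by omega) (by omega))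
        (le_of_lt (lam_succ_lt g C hC n (by omega)))

lemma pc_eq (hC : Generic g C) (k : ℕ) :
    pc g C k = Lc g C - 2 * ∑ j ∈ Finset.Icc 1 g,
      min (lam g C k - lam g C 0) (lam g C j - lam g C 0) := by
  rcases Nat.eq_zero_or_pos k with rfl | hk
  · rw [pc, if_pos rfl]
    have : ∀ j ∈ Finset.Icc 1 g,
        min (lam g C 0 - lam g C 0) (lam g C j - lam g C 0) = 0 := by
      intro j hj
      rw [Finset.mem_Icc] at hj
      have := lam_mono g C hC 0 j (Nat.zero_le j) hj.2
      rw [sub_self, min_eq_left (by linarith)]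
    rw [Finset.sum_congr rfl this]
    simp
  · rw [pc, if_neg (by omega : k ≠ 0)]

lemma pc_diff (hC : Generic g C) (k : ℕ) (hk : k < g) :
    pc g C k - pc g C (k+1)
      = 2 * ((g : ℝ) - k) * (lam g C (k+1) - lam g C k) := by
  have hsum : ∑ j ∈ Finset.Icc 1 g,
      (min (lam g C (k+1) - lam g C 0) (lam g C j - lam g C 0)
        - min (lam g C k - lam g C 0) (lam g C j - lam g C 0))
      = ((g : ℝ) - k) * (lam g C (k+1) - lam g C k) := by
    have hcongr : ∀ j ∈ Finset.Icc 1 g,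
        (min (lam g C (k+1) - lam g C 0) (lam g C j - lam g C 0)
          - min (lam g C k - lam g C 0) (lam g C j - lam g C 0))
        = if k + 1 ≤ j then lam g C (k+1) - lam g C k else 0 := by
      intro j hj
      rw [Finset.mem_Icc] at hj
      by_cases hjk : k + 1 ≤ j
      · rw [if_pos hjk]
        have ha : lam g C (k+1) ≤ lam g C j := lam_mono g C hC _ _ hjk hj.2
        have hb : lam g C k ≤ lam g C (k+1) := le_of_lt (lam_succ_lt g C hC k hk)
        rw [min_eq_left (by linarith), min_eq_left (by linarith)]
        ring
      · push_neg at hjk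
        have hjk' : j ≤ k := by omega
        have ha : lam g C j ≤ lam g C k := lam_mono g C hC _ _ hjk' (by omega)
        have hb : lam g C k ≤ lam g C (k+1) := le_of_lt (lam_succ_lt g C hC k hk)
        rw [if_neg (by omega : ¬ k + 1 ≤ j),
          min_eq_right (by linarith), min_eq_right (by linarith)]
        ring
    rw [Finset.sum_congr rfl hcongr, ← Finset.sum_filter]
    have hfil : (Finset.Icc 1 g).filter (fun j => k + 1 ≤ j) = Finset.Icc (k+1) g := by
      ext x
      simp only [Finset.mem_filter, Finset.mem_Icc]
      omega
    rw [hfil, Finset.sum_const, Nat.card_Icc]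
    have : g + 1 - (k + 1) = g - k := by omega
    rw [this, nsmul_eq_mul, Nat.cast_sub (le_of_lt hk)]
  rw [pc_eq g C hC k, pc_eq g C hC (k+1)]
  rw [Finset.sum_sub_distrib] at hsum
  linarith

end DetKmatAux

open TropToda in
/-- `det K = (g+1) p_0 p_1 ⋯ p_{g−1}`. -/
theorem det_Kmat
    (g : ℕ) (hg : 0 < g) (C : ℤ → ℝ) (hC : Generic g C) :
    (Kmat g C).det = (g + 1) * ∏ i ∈ Finset.range g, pc g C i := by
  have hKmat : Kmat g C = triMat
      (fun k => pc g C k + pc g C (k+1) + 2 * (lam g C (k+1) - lam g C k))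
      (fun k => -(pc g C (k+1))) g := by
    ext a b
    show (if a = b then _ else _) = (if (a : ℕ) = (b : ℕ) then _ else _)
    by_cases h : (a : ℕ) = (b : ℕ)
    · rw [if_pos (Fin.ext h), if_pos h]
    · rw [if_neg (fun hh => h (congrArg Fin.val hh)), if_neg h]
  have hd : ∀ k < g, ((g : ℝ) - k)
        * (pc g C k + pc g C (k+1) + 2 * (lam g C (k+1) - lam g C k))
      = ((g : ℝ) - k) * (pc g C k + pc g C (k+1)) + pc g C k - pc g C (k+1) := by
    intro k hk
    linear_combination - pc_diff g C hC k hk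
  have he : ∀ k : ℕ, (-(pc g C (k+1))) ^ 2 = pc g C (k+1) ^ 2 := by
    intro k; ring
  have hclosed := triDet_closed g
    (fun k => pc g C k + pc g C (k+1) + 2 * (lam g C (k+1) - lam g C k))
    (fun k => -(pc g C (k+1))) (pc g C) hd he g le_rfl
  rw [hKmat, det_triMat, hclosed]
  norm_num
end
end

section
/- For every Z ∈ ℝ^g, the infimum defining Θ(Z) is attained (in particular Θ(Z) is finite). Moreover Θ satisfies the quasi-periodicity Θ(Z + lK) = Θ(Z) − (1/2) l K lᵀ − l Zᵀ for every l ∈ ℤ^g, and Θ is even: Θ(−Z) = Θ(Z) for all Z ∈ ℝ^g. -/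
open Matrix Finset

noncomputable section

section ThetaAux

open TropToda

private lemma theta_coercive (g : ℕ) (hg : 0 < g) (K : Matrix (Fin g) (Fin g) ℝ)
    (hpd : K.PosDef) :
    ∃ c > 0, ∀ x : Fin g → ℝ, c * ‖x‖^2 ≤ Matrix.vecMul x K ⬝ᵥ x := by
  haveI : Nonempty (Fin g) := ⟨⟨0, hg⟩⟩
  have hcont : Continuous fun x : Fin g → ℝ => Matrix.vecMul x K ⬝ᵥ x := by
    simp only [dotProduct, Matrix.vecMul, dotProduct]
    fun_prop
  have hsph : (Metric.sphere (0 : Fin g → ℝ) 1).Nonempty := by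
    apply NormedSpace.sphere_nonempty.2; norm_num
  obtain ⟨x₀, hx₀, hmin⟩ :=
    (isCompact_sphere (0 : Fin g → ℝ) 1).exists_isMinOn hsph hcont.continuousOn
  have hx₀ne : x₀ ≠ 0 := by
    intro h
    rw [Metric.mem_sphere] at hx₀
    simp [h] at hx₀
  have hc : 0 < Matrix.vecMul x₀ K ⬝ᵥ x₀ := by
    have := hpd.dotProduct_mulVec_pos hx₀ne
    simpa [Matrix.dotProduct_mulVec] using this
  refine ⟨_, hc, fun x => ?_⟩
  rcases eq_or_ne x 0 with rfl | hx
  · simp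
  · have hnx : 0 < ‖x‖ := norm_pos_iff.2 hx
    have hmem : ‖x‖⁻¹ • x ∈ Metric.sphere (0 : Fin g → ℝ) 1 := by
      simp [norm_smul, abs_of_pos hnx, inv_mul_cancel₀ hnx.ne']
    have h1 := hmin hmem
    have h2 : Matrix.vecMul (‖x‖⁻¹ • x) K ⬝ᵥ (‖x‖⁻¹ • x)
        = ‖x‖⁻¹ * (‖x‖⁻¹ * (Matrix.vecMul x K ⬝ᵥ x)) := by
      rw [Matrix.smul_vecMul, smul_dotProduct, dotProduct_smul]
      simp [smul_eq_mul]
    have h3 : Matrix.vecMul x₀ K ⬝ᵥ x₀ ≤ ‖x‖⁻¹ * (‖x‖⁻¹ * (Matrix.vecMul x K ⬝ᵥ x)) := by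
      simpa [h2] using h1
    calc (Matrix.vecMul x₀ K ⬝ᵥ x₀) * ‖x‖^2
        ≤ (‖x‖⁻¹ * (‖x‖⁻¹ * (Matrix.vecMul x K ⬝ᵥ x))) * ‖x‖^2 :=
          mul_le_mul_of_nonneg_right h3 (by positivity)
      _ = Matrix.vecMul x K ⬝ᵥ x := by rw [pow_two]; field_simp

private lemma theta_least (g : ℕ) (hg : 0 < g) (K : Matrix (Fin g) (Fin g) ℝ)
    (hpd : K.PosDef) (Z : Fin g → ℝ) :
    ∃ m : Fin g → ℤ, IsLeast (Set.range fun m' : Fin g → ℤ => thetaTerm g K m' Z)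
      (thetaTerm g K m Z) := by
  obtain ⟨c, hc, hcoer⟩ := theta_coercive g hg K hpd
  set f : (Fin g → ℤ) → ℝ := fun m => thetaTerm g K m Z with hf
  set A : ℝ := ∑ i, |Z i| with hA
  have hA0 : 0 ≤ A := Finset.sum_nonneg fun i _ => abs_nonneg _
  have hlow : ∀ m : Fin g → ℤ, c/2 * ‖(fun i => (m i : ℝ))‖^2
      - ‖(fun i => (m i : ℝ))‖ * A ≤ f m := by
    intro m
    set x : Fin g → ℝ := fun i => (m i : ℝ) with hx
    have h1 : c * ‖x‖^2 ≤ Matrix.vecMul x K ⬝ᵥ x := hcoer x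
    have h2 : -(‖x‖ * A) ≤ x ⬝ᵥ Z := by
      have : |x ⬝ᵥ Z| ≤ ‖x‖ * A := by
        calc |x ⬝ᵥ Z| ≤ ∑ i, |x i * Z i| := Finset.abs_sum_le_sum_abs _ _
          _ ≤ ∑ i, ‖x‖ * |Z i| := by
              apply Finset.sum_le_sum
              intro i _
              rw [abs_mul]
              exact mul_le_mul_of_nonneg_right (by simpa using norm_le_pi_norm x i)
                (abs_nonneg _)
          _ = ‖x‖ * A := by rw [hA, Finset.mul_sum]
      linarith [neg_abs_le (x ⬝ᵥ Z)]
    have : f m = 1/2 * (Matrix.vecMul x K ⬝ᵥ x) + x ⬝ᵥ Z := rfl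
    rw [this]
    nlinarith
  set N : ℤ := ⌈2 * A / c⌉ with hN
  set S : Set (Fin g → ℤ) := {m | f m ≤ f 0} with hS
  have hnormZ : f 0 = 0 := by simp [hf, thetaTerm]
  have hSsub : S ⊆ Set.Icc (fun _ => -N) (fun _ => N) := by
    intro m hm
    have hm' : f m ≤ 0 := by rw [← hnormZ]; exact hm
    set x : Fin g → ℝ := fun i => (m i : ℝ) with hx
    have hb : ‖x‖ ≤ 2 * A / c := by
      by_contra hcon
      push_neg at hcon
      have h1 := hlow m
      have hxpos : 0 < ‖x‖ := lt_of_le_of_lt (by positivity) hcon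
      have : c/2 * ‖x‖^2 - ‖x‖ * A > 0 := by
        have h2 : 2 * A < c * ‖x‖ := by
          rw [div_lt_iff₀ hc] at hcon; linarith
        nlinarith
      linarith
    constructor
    · intro i
      have h1 : |(m i : ℝ)| ≤ ‖x‖ := by simpa using norm_le_pi_norm x i
      have h2 : ((m i : ℝ)) ≥ -(2 * A / c) := by
        have := neg_abs_le ((m i : ℝ)); linarith
      have : (-N : ℝ) ≤ (m i : ℝ) := by
        have hNz : (2:ℝ) * A / c ≤ (N : ℝ) := Int.le_ceil _
        linarith
      exact_mod_cast this
    · intro i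
      have h1 : |(m i : ℝ)| ≤ ‖x‖ := by simpa using norm_le_pi_norm x i
      have h2 : ((m i : ℝ)) ≤ 2 * A / c := le_trans (le_abs_self _) (le_trans h1 hb)
      have : (m i : ℝ) ≤ (N : ℝ) := le_trans h2 (Int.le_ceil _)
      exact_mod_cast this
  have hSfin : S.Finite := Set.Finite.subset (Set.finite_Icc _ _) hSsub
  have hSne : S.Nonempty := ⟨0, by simp [hS]⟩
  obtain ⟨m₀, hm₀S, hm₀min⟩ := Set.exists_min_image S f hSfin hSne
  refine ⟨m₀, ⟨m₀, rfl⟩, ?_⟩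
  rintro _ ⟨m, rfl⟩
  by_cases hmS : m ∈ S
  · exact hm₀min m hmS
  · have : f 0 < f m := by
      simp only [hS, Set.mem_setOf_eq, not_le] at hmS
      exact hmS
    exact le_of_lt (lt_of_le_of_lt (hm₀min 0 (by simp [hS])) this)

private lemma theta_symm_dot {g : ℕ} {K : Matrix (Fin g) (Fin g) ℝ} (hsym : K.IsSymm)
    (x y : Fin g → ℝ) :
    Matrix.vecMul y K ⬝ᵥ x = Matrix.vecMul x K ⬝ᵥ y := by
  calc Matrix.vecMul y K ⬝ᵥ x = y ⬝ᵥ (K *ᵥ x) := (Matrix.dotProduct_mulVec y K x).symm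
    _ = y ⬝ᵥ (Kᵀ *ᵥ x) := by conv_lhs => rw [← hsym]
    _ = y ⬝ᵥ (Matrix.vecMul x K) := by rw [Matrix.mulVec_transpose]
    _ = Matrix.vecMul x K ⬝ᵥ y := dotProduct_comm _ _

private lemma thetaTerm_shift {g : ℕ} {K : Matrix (Fin g) (Fin g) ℝ} (hsym : K.IsSymm)
    (m l : Fin g → ℤ) (Z : Fin g → ℝ) :
    thetaTerm g K m (fun i => Z i + Matrix.vecMul (fun j => (l j : ℝ)) K i)
      = thetaTerm g K (m + l) Z
        - (1/2) * (Matrix.vecMul (fun j => (l j : ℝ)) K ⬝ᵥ fun j => (l j : ℝ))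
        - ((fun j => (l j : ℝ)) ⬝ᵥ Z) := by
  set x : Fin g → ℝ := fun i => (m i : ℝ) with hx
  set y : Fin g → ℝ := fun i => (l i : ℝ) with hy
  have hcast : (fun i => (((m + l) i : ℤ) : ℝ)) = x + y := by
    funext i; simp [hx, hy]
  have hZ : (fun i => Z i + Matrix.vecMul y K i) = Z + Matrix.vecMul y K := rfl
  simp only [thetaTerm, hcast, hZ]
  rw [Matrix.add_vecMul, add_dotProduct, dotProduct_add, dotProduct_add,
    dotProduct_add, add_dotProduct]
  have h1 : x ⬝ᵥ Matrix.vecMul y K = Matrix.vecMul x K ⬝ᵥ y := by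
    rw [dotProduct_comm]; exact theta_symm_dot hsym x y
  have h2 : Matrix.vecMul y K ⬝ᵥ x = Matrix.vecMul x K ⬝ᵥ y := theta_symm_dot hsym x y
  rw [h1, h2]; ring

private lemma thetaTerm_even' {g : ℕ} (K : Matrix (Fin g) (Fin g) ℝ) (m : Fin g → ℤ)
    (Z : Fin g → ℝ) :
    thetaTerm g K m (-Z) = thetaTerm g K (-m) Z := by
  have hcast : (fun i => (((-m) i : ℤ) : ℝ)) = -(fun i => ((m i : ℤ) : ℝ)) := by
    funext i; simp
  simp only [thetaTerm, hcast, Matrix.neg_vecMul, neg_dotProduct,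
    dotProduct_neg, neg_neg]

end ThetaAux

open TropToda in
/-- for symmetric positive definite `K` the infimum defining `Θ` is
attained; `Θ` is quasi-periodic with respect to the lattice `ℤ^g K` and even. -/
theorem theta_attained_quasiperiodic_even
    (g : ℕ) (hg : 0 < g) (K : Matrix (Fin g) (Fin g) ℝ)
    (hsym : K.IsSymm) (hpd : K.PosDef) :
    (∀ Z : Fin g → ℝ, ∃ m : Fin g → ℤ,
        theta g K Z = thetaTerm g K m Z ∧
        IsLeast (Set.range fun m' : Fin g → ℤ => thetaTerm g K m' Z)
          (thetaTerm g K m Z)) ∧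
    (∀ Z : Fin g → ℝ, ∀ l : Fin g → ℤ,
        theta g K (fun i => Z i + Matrix.vecMul (fun j => (l j : ℝ)) K i)
          = theta g K Z
            - (1/2) * (Matrix.vecMul (fun j => (l j : ℝ)) K ⬝ᵥ fun j => (l j : ℝ))
            - ((fun j => (l j : ℝ)) ⬝ᵥ Z)) ∧
    (∀ Z : Fin g → ℝ, theta g K (-Z) = theta g K Z) := by
  have hattain : ∀ Z : Fin g → ℝ, ∃ m : Fin g → ℤ,
      IsLeast (Set.range fun m' : Fin g → ℤ => thetaTerm g K m' Z) (thetaTerm g K m Z) :=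
    theta_least g hg K hpd
  have htheta : ∀ (Z : Fin g → ℝ) (m : Fin g → ℤ),
      IsLeast (Set.range fun m' : Fin g → ℤ => thetaTerm g K m' Z) (thetaTerm g K m Z) →
      theta g K Z = thetaTerm g K m Z := fun Z m h => h.csInf_eq
  refine ⟨?_, ?_, ?_⟩
  · intro Z
    obtain ⟨m, hm⟩ := hattain Z
    exact ⟨m, htheta Z m hm, hm⟩
  · intro Z l
    obtain ⟨m₀, hm₀⟩ := hattain Z
    have hleast' : IsLeast (Set.range fun m' : Fin g → ℤ =>
          thetaTerm g K m' fun i => Z i + Matrix.vecMul (fun j => (l j : ℝ)) K i)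
        (thetaTerm g K (m₀ - l) fun i => Z i + Matrix.vecMul (fun j => (l j : ℝ)) K i) := by
      constructor
      · exact ⟨m₀ - l, rfl⟩
      · rintro _ ⟨m, rfl⟩
        show thetaTerm g K (m₀ - l) (fun i => Z i + Matrix.vecMul (fun j => (l j : ℝ)) K i)
          ≤ thetaTerm g K m fun i => Z i + Matrix.vecMul (fun j => (l j : ℝ)) K i
        rw [thetaTerm_shift hsym m l Z, thetaTerm_shift hsym (m₀ - l) l Z, sub_add_cancel]
        have := hm₀.2 ⟨m + l, rfl⟩
        linarith
    have e1 := htheta _ (m₀ - l) hleast'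
    have e2 := htheta Z m₀ hm₀
    rw [e1, e2, thetaTerm_shift hsym (m₀ - l) l Z, sub_add_cancel]
  · intro Z
    have hset : (Set.range fun m : Fin g → ℤ => thetaTerm g K m (-Z))
        = Set.range fun m : Fin g → ℤ => thetaTerm g K m Z := by
      ext r
      constructor
      · rintro ⟨m, rfl⟩
        exact ⟨-m, (thetaTerm_even' K m Z).symm⟩
      · rintro ⟨m, rfl⟩
        refine ⟨-m, ?_⟩
        show thetaTerm g K (-m) (-Z) = thetaTerm g K m Z
        rw [thetaTerm_even', neg_neg]
    simp only [theta, hset]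
end
end

section
/- Let ĝ = (g, g−1, …, 1) ∈ ℤ^g. Then ĝ K = (g+1) L e_1. Consequently: (1) for every m ∈ ℤ^g and Z ∈ D_m one has Z − (g+1)L e_1 ∈ D_{m + ĝ}, and Z − (g+1)L e_1 ≡ Z modulo the lattice ℤ^g K; (2) for every Z_0 ∈ ℝ^g the function T_n^t = Θ(Z_n^t) satisfies T_{n+g+1}^t = T_n^t + c_n^t, where c_n^t = −gL·n + (∑_{i=1}^{g}(λ_i − λ_0))·t + ĝ·Z_0ᵀ − (1/2) ĝ K ĝᵀ. -/
open Matrix Finset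

noncomputable section

namespace TropAux
open TropToda Matrix Finset

variable {g : ℕ} {C : ℤ → ℝ}

lemma lam_zero : lam g C 0 = C (g : ℤ) := by simp [lam]

lemma lam_succ_eq (i : ℕ) :
    lam g C (i + 1) = C ((g : ℤ) - i - 1) - C ((g : ℤ) - i) := by
  rw [lam, if_neg (Nat.succ_ne_zero i)]
  have h1 : (g : ℤ) - ((i + 1 : ℕ) : ℤ) = (g : ℤ) - i - 1 := by push_cast; ring
  rw [h1]
  have h2 : (g : ℤ) - i - 1 + 1 = (g : ℤ) - i := by ring
  rw [h2]

lemma lam_succ_lt (hg : 0 < g) (hC : Generic g C) :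
    ∀ i, i < g → lam g C i < lam g C (i + 1) := by
  intro i hi
  cases i with
  | zero =>
      rw [lam_zero, lam_succ_eq]
      have h := hC.2.2
      have e : (g : ℤ) - (0 : ℕ) - 1 = (g : ℤ) - 1 := by push_cast; ring
      have e2 : (g : ℤ) - ((0:ℕ) : ℤ) = (g : ℤ) := by push_cast; ring
      rw [e, e2]
      linarith
  | succ k =>
      rw [lam_succ_eq, lam_succ_eq]
      have h0 : (0 : ℤ) ≤ (g : ℤ) - k - 2 := by omega
      have h1 : (g : ℤ) - k - 2 ≤ (g : ℤ) - 2 := by omega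
      have h := hC.2.1 ((g : ℤ) - k - 2) h0 h1
      have e1 : (g : ℤ) - k - 2 + 2 = (g : ℤ) - k := by ring
      have e2 : (g : ℤ) - k - 2 + 1 = (g : ℤ) - k - 1 := by ring
      rw [e1, e2] at h
      have e3 : (g : ℤ) - ((k + 1 : ℕ) : ℤ) - 1 = (g : ℤ) - k - 2 := by push_cast; ring
      have e4 : (g : ℤ) - ((k + 1 : ℕ) : ℤ) = (g : ℤ) - k - 1 := by push_cast; ring
      have e5 : (g : ℤ) - (k : ℕ) - 1 = (g : ℤ) - k - 1 := by push_cast; ring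
      have e6 : (g : ℤ) - ((k : ℕ) : ℤ) = (g : ℤ) - k := by push_cast; ring
      rw [e3, e4, e5, e6]
      linarith

lemma lam_mono (hg : 0 < g) (hC : Generic g C) :
    ∀ i j, i ≤ j → j ≤ g → lam g C i ≤ lam g C j := by
  have key : ∀ k i, i + k ≤ g → lam g C i ≤ lam g C (i + k) := by
    intro k
    induction k with
    | zero => intro i _; simp
    | succ n ih =>
        intro i h
        have h1 : i + n ≤ g := by omega
        have h2 : i + n < g := by omega
        calc lam g C i ≤ lam g C (i + n) := ih i h1
          _ ≤ lam g C (i + n + 1) := le_of_lt (lam_succ_lt hg hC _ h2)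
  intro i j hij hjg
  have := key (j - i) i (by omega)
  rwa [show i + (j - i) = j by omega] at this

lemma htel (hg : 0 < g) : ∑ j ∈ Icc 1 g, lam g C j = C 0 - C (g : ℤ) := by
  have h1 : Icc 1 g = Ico 1 (g + 1) := (Finset.Ico_add_one_right_eq_Icc 1 g).symm
  rw [h1, Finset.sum_Ico_eq_sum_range]
  have h2 : g + 1 - 1 = g := by omega
  rw [h2]
  have h3 : ∀ i ∈ range g, lam g C (1 + i) =
      (fun k : ℕ => C ((g : ℤ) - (k : ℤ))) (i + 1) - (fun k : ℕ => C ((g : ℤ) - (k : ℤ))) i := by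
    intro i _
    rw [show 1 + i = i + 1 by omega, lam_succ_eq]
    have e : ((g : ℤ) - ((i + 1 : ℕ) : ℤ)) = (g : ℤ) - i - 1 := by push_cast; ring
    simp only [e]
  rw [Finset.sum_congr rfl h3, Finset.sum_range_sub (fun k : ℕ => C ((g : ℤ) - (k : ℤ))) g]
  simp

lemma sum_min (hg : 0 < g) (hC : Generic g C) {i : ℕ} (h1 : 1 ≤ i) (h2 : i ≤ g) :
    ∑ j ∈ Icc 1 g, min (lam g C i - lam g C 0) (lam g C j - lam g C 0)
      = (∑ j ∈ Icc 1 i, (lam g C j - lam g C 0))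
        + ((g : ℝ) - i) * (lam g C i - lam g C 0) := by
  have e0 : ∀ a b : ℕ, Icc (a+1) b = Ioc a b := fun a b => Finset.Icc_add_one_left_eq_Ioc a b
  have hsplit := Finset.sum_Ioc_consecutive
    (fun j => min (lam g C i - lam g C 0) (lam g C j - lam g C 0))
    (Nat.zero_le i) h2
  rw [show Icc 1 g = Ioc 0 g from e0 0 g, ← hsplit]
  have hA : ∑ j ∈ Ioc 0 i, min (lam g C i - lam g C 0) (lam g C j - lam g C 0)
      = ∑ j ∈ Icc 1 i, (lam g C j - lam g C 0) := by
    rw [← e0 0 i]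
    refine Finset.sum_congr rfl (fun j hj => ?_)
    rw [mem_Icc] at hj
    exact min_eq_right (by linarith [lam_mono hg hC j i hj.2 h2])
  have hB : ∑ j ∈ Ioc i g, min (lam g C i - lam g C 0) (lam g C j - lam g C 0)
      = ((g : ℝ) - i) * (lam g C i - lam g C 0) := by
    have : ∀ j ∈ Ioc i g, min (lam g C i - lam g C 0) (lam g C j - lam g C 0)
        = lam g C i - lam g C 0 := by
      intro j hj
      rw [mem_Ioc] at hj
      exact min_eq_left (by linarith [lam_mono hg hC i j (le_of_lt hj.1) hj.2])
    rw [Finset.sum_congr rfl this, Finset.sum_const, Nat.card_Ioc, nsmul_eq_mul,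
      Nat.cast_sub h2]
  rw [hA, hB]

lemma pc_one (hg : 0 < g) (hC : Generic g C) :
    pc g C 1 = Lc g C - 2 * (g : ℝ) * (lam g C 1 - lam g C 0) := by
  rw [pc, if_neg one_ne_zero]
  have : ∀ j ∈ Icc 1 g, min (lam g C 1 - lam g C 0) (lam g C j - lam g C 0)
      = lam g C 1 - lam g C 0 := by
    intro j hj
    rw [mem_Icc] at hj
    exact min_eq_left (by linarith [lam_mono hg hC 1 j hj.1 hj.2])
  rw [Finset.sum_congr rfl this, Finset.sum_const, Nat.card_Icc, nsmul_eq_mul]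
  have : g + 1 - 1 = g := by omega
  rw [this]
  ring

lemma pc_succ (hg : 0 < g) (hC : Generic g C) {i : ℕ} (h1 : 1 ≤ i) (h2 : i + 1 ≤ g) :
    pc g C (i + 1) = pc g C i - 2 * ((g : ℝ) - i) * (lam g C (i + 1) - lam g C i) := by
  rw [pc, pc, if_neg (by omega : i + 1 ≠ 0), if_neg (by omega : i ≠ 0)]
  rw [sum_min hg hC (by omega : 1 ≤ i + 1) h2, sum_min hg hC h1 (by omega)]
  rw [Finset.sum_Icc_succ_top (by omega : 1 ≤ i + 1)]
  push_cast
  ring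

lemma pc_pos (hg : 0 < g) (hC : Generic g C) : ∀ i, i ≤ g → 0 < pc g C i := by
  have hSC : ∑ j ∈ Icc 1 g, (lam g C j - lam g C 0) = C 0 - ((g : ℝ) + 1) * C (g : ℤ) := by
    rw [Finset.sum_sub_distrib, htel hg, Finset.sum_const, Nat.card_Icc, lam_zero]
    have : g + 1 - 1 = g := by omega
    rw [this, nsmul_eq_mul]
    ring
  have hSCnn : 0 ≤ ∑ j ∈ Icc 1 g, (lam g C j - lam g C 0) :=
    Finset.sum_nonneg (fun j hj => by
      rw [mem_Icc] at hj
      linarith [lam_mono hg hC 0 j (Nat.zero_le j) hj.2])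
  have hL : Lc g C = (C (-1) - 2 * C 0) + 2 * ∑ j ∈ Icc 1 g, (lam g C j - lam g C 0) := by
    rw [hSC, Lc]; ring
  have hL0 : 0 < Lc g C := by
    rw [hL]; have := hC.1; linarith
  intro i hi
  cases i with
  | zero => rw [pc, if_pos rfl]; exact hL0
  | succ k =>
      rw [pc, if_neg (Nat.succ_ne_zero k)]
      have hb : ∑ j ∈ Icc 1 g, min (lam g C (k+1) - lam g C 0) (lam g C j - lam g C 0)
          ≤ ∑ j ∈ Icc 1 g, (lam g C j - lam g C 0) :=
        Finset.sum_le_sum (fun j _ => min_le_right _ _)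
      have := hC.1
      linarith

end TropAux
namespace TropAux
open TropToda Matrix Finset

variable {g : ℕ} {C : ℤ → ℝ}

def vext (g : ℕ) (v : Fin g → ℝ) (i : ℕ) : ℝ := if h : i < g then v ⟨i, h⟩ else 0

def vprev (g : ℕ) (v : Fin g → ℝ) : ℕ → ℝ
  | 0 => 0
  | (k+1) => vext g v k

lemma vext_coe (v : Fin g → ℝ) (b : Fin g) : vext g v (b : ℕ) = v b := by
  rw [vext, dif_pos b.isLt]

lemma col_sum (g : ℕ) (C : ℤ → ℝ) (v : Fin g → ℝ) (b : Fin g) :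
    Matrix.vecMul v (Kmat g C) b
      = vext g v (b : ℕ) * (pc g C (b : ℕ) + pc g C ((b : ℕ) + 1)
            + 2 * (lam g C ((b : ℕ) + 1) - lam g C (b : ℕ)))
        - vprev g v (b : ℕ) * pc g C (b : ℕ)
        - vext g v ((b : ℕ) + 1) * pc g C ((b : ℕ) + 1) := by
  have hexp : ∀ a : Fin g, v a * Kmat g C a b =
      (if a = b then v a * (pc g C (b : ℕ) + pc g C ((b : ℕ) + 1)
          + 2 * (lam g C ((b : ℕ) + 1) - lam g C (b : ℕ))) else 0)
      + (if (a : ℕ) + 1 = (b : ℕ) then v a * (-pc g C (b : ℕ)) else 0)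
      + (if (a : ℕ) = (b : ℕ) + 1 then v a * (-pc g C ((b : ℕ) + 1)) else 0) := by
    intro a
    rw [Kmat]
    by_cases h1 : a = b
    · have hv : (a : ℕ) = (b : ℕ) := by rw [h1]
      have hn2 : ¬((a : ℕ) + 1 = (b : ℕ)) := by omega
      have hn3 : ¬((a : ℕ) = (b : ℕ) + 1) := by omega
      simp only [if_pos h1, if_neg hn2, if_neg hn3]
      rw [hv]
      ring
    · have hv : (a : ℕ) ≠ (b : ℕ) := fun h => h1 (Fin.ext h)
      by_cases h2 : (a : ℕ) + 1 = (b : ℕ)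
      · have hn3 : ¬((a : ℕ) = (b : ℕ) + 1) := by omega
        have hn4 : ¬((b : ℕ) + 1 = (a : ℕ)) := by omega
        simp only [if_neg h1, if_pos h2, if_neg hn3, if_neg hn4]
        rw [h2]
        ring
      · by_cases h3 : (b : ℕ) + 1 = (a : ℕ)
        · have h3' : (a : ℕ) = (b : ℕ) + 1 := h3.symm
          simp only [if_neg h1, if_neg h2, if_pos h3, if_pos h3']
          try ring
        · have h3' : ¬((a : ℕ) = (b : ℕ) + 1) := fun h => h3 h.symm
          simp only [if_neg h1, if_neg h2, if_neg h3, if_neg h3']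
          try ring
  have : Matrix.vecMul v (Kmat g C) b = ∑ a : Fin g, v a * Kmat g C a b := by
    rw [Matrix.vecMul, dotProduct]
  rw [this, Finset.sum_congr rfl (fun a _ => hexp a), Finset.sum_add_distrib,
    Finset.sum_add_distrib]
  have hS1 : (∑ a : Fin g, if a = b then v a * (pc g C (b : ℕ) + pc g C ((b : ℕ) + 1)
      + 2 * (lam g C ((b : ℕ) + 1) - lam g C (b : ℕ))) else 0)
      = vext g v (b : ℕ) * (pc g C (b : ℕ) + pc g C ((b : ℕ) + 1)
          + 2 * (lam g C ((b : ℕ) + 1) - lam g C (b : ℕ))) := by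
    rw [Finset.sum_ite_eq' univ b, if_pos (mem_univ b), vext_coe]
  have hS2 : (∑ a : Fin g, if (a : ℕ) + 1 = (b : ℕ) then v a * (-pc g C (b : ℕ)) else 0)
      = -(vprev g v (b : ℕ) * pc g C (b : ℕ)) := by
    rcases hb : (b : ℕ) with _ | k
    · rw [Finset.sum_eq_zero (fun a _ => if_neg (by omega))]
      simp [vprev]
    · have hk : k < g := by have := b.isLt; omega
      have : ∀ a : Fin g, (if (a : ℕ) + 1 = k + 1 then v a * (-pc g C (k + 1)) else 0)
          = (if a = (⟨k, hk⟩ : Fin g) then v a * (-pc g C (k + 1)) else 0) := by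
        intro a
        congr 1
        simp only [eq_iff_iff, Fin.ext_iff]
        constructor <;> (intro h; omega)
      rw [Finset.sum_congr rfl (fun a _ => this a), Finset.sum_ite_eq' univ,
        if_pos (mem_univ _)]
      show v ⟨k, hk⟩ * (-pc g C (k+1)) = -(vprev g v (k+1) * pc g C (k+1))
      rw [vprev, vext, dif_pos hk]
      ring
  have hS3 : (∑ a : Fin g, if (a : ℕ) = (b : ℕ) + 1 then v a * (-pc g C ((b : ℕ) + 1)) else 0)
      = -(vext g v ((b : ℕ) + 1) * pc g C ((b : ℕ) + 1)) := by
    by_cases h : (b : ℕ) + 1 < g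
    · have : ∀ a : Fin g, (if (a : ℕ) = (b : ℕ) + 1 then v a * (-pc g C ((b : ℕ) + 1)) else 0)
          = (if a = (⟨(b : ℕ) + 1, h⟩ : Fin g) then v a * (-pc g C ((b : ℕ) + 1)) else 0) := by
        intro a
        congr 1
        simp only [eq_iff_iff, Fin.ext_iff]
      rw [Finset.sum_congr rfl (fun a _ => this a), Finset.sum_ite_eq' univ,
        if_pos (mem_univ _), vext, dif_pos h]
      ring
    · rw [Finset.sum_eq_zero (fun a _ => if_neg (by have := a.isLt; omega)),
        vext, dif_neg h]
      ring
  rw [hS1, hS2, hS3]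
  ring

lemma vecMul_ghat (hg : 0 < g) (hC : Generic g C) :
    Matrix.vecMul (fun i : Fin g => (g : ℝ) - (i : ℕ)) (Kmat g C)
      = fun i : Fin g => ((g : ℝ) + 1) * Lc g C * e1 g i := by
  funext b
  rw [col_sum]
  set v : Fin g → ℝ := fun i : Fin g => (g : ℝ) - (i : ℕ) with hv
  have hval : ∀ k : ℕ, vext g v k = if k < g then (g : ℝ) - k else 0 := by
    intro k
    by_cases h : k < g
    · rw [vext, dif_pos h, if_pos h, hv]
    · rw [vext, dif_neg h, if_neg h]
  rcases hb : (b : ℕ) with _ | k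
  · -- first column
    have he1 : e1 g b = 1 := by rw [e1, hb]; norm_num
    have h0 : vext g v 0 = (g : ℝ) := by rw [hval, if_pos hg]; norm_num
    have h1 : vext g v 1 = (g : ℝ) - 1 := by
      by_cases h : 1 < g
      · rw [hval, if_pos h]; norm_num
      · have hg1 : g = 1 := by omega
        rw [hval, if_neg h, hg1]; norm_num
    have hz : vprev g v 0 = 0 := rfl
    rw [hb] at *
    rw [h0, h1, hz, he1, pc_one hg hC, pc, if_pos rfl]
    ring
  · -- other columns
    have hk1 : k + 1 < g := by rw [← hb]; exact b.isLt
    have he1 : e1 g b = 0 := by rw [e1, hb]; simp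
    have h1 : vext g v (k + 1) = (g : ℝ) - (k + 1) := by
      rw [hval, if_pos hk1]; push_cast; ring
    have h2 : vprev g v (k + 1) = (g : ℝ) - k := by
      show vext g v k = _
      rw [hval, if_pos (by omega)]
    have h3 : vext g v (k + 1 + 1) = (g : ℝ) - (k + 2) := by
      by_cases h : k + 1 + 1 < g
      · rw [hval, if_pos h]; push_cast; ring
      · have hgk : g = k + 2 := by omega
        rw [hval, if_neg h, hgk]; push_cast; ring
    have h4 := pc_succ hg hC (i := k + 1) (by omega) (by omega)
    rw [h1, h2, h3, he1, h4]
    push_cast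
    ring

end TropAux
namespace TropAux
open TropToda Matrix Finset

variable {g : ℕ} {C : ℤ → ℝ}

lemma kmat_symm (g : ℕ) (C : ℤ → ℝ) : (Kmat g C)ᵀ = Kmat g C := by
  ext a b
  show Kmat g C b a = Kmat g C a b
  rw [Kmat, Kmat]
  by_cases h1 : a = b
  · rw [if_pos h1, if_pos h1.symm, h1]
  · have h1' : ¬(b = a) := fun h => h1 h.symm
    by_cases h2 : (a : ℕ) + 1 = (b : ℕ)
    · have hn : ¬((b : ℕ) + 1 = (a : ℕ)) := by omega
      simp only [if_neg h1, if_neg h1', if_pos h2, if_neg hn]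
    · by_cases h3 : (b : ℕ) + 1 = (a : ℕ)
      · simp only [if_neg h1, if_neg h1', if_neg h2, if_pos h3]
      · simp only [if_neg h1, if_neg h1', if_neg h2, if_neg h3]

lemma kmat_quad (hg : 0 < g) (hC : Generic g C) :
    ∃ δ : ℝ, 0 < δ ∧ ∀ x : Fin g → ℝ,
      δ * (∑ i, x i ^ 2) ≤ Matrix.vecMul x (Kmat g C) ⬝ᵥ x := by
  obtain ⟨n, rfl⟩ : ∃ n, g = n + 1 := ⟨g - 1, by omega⟩
  clear hg
  set G : ℕ := n + 1 with hG
  -- the minimum gap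
  obtain ⟨δ0, hδ0mem, hδ0le⟩ :
      ∃ δ0, (δ0 ∈ ((range G).image fun i => lam G C (i+1) - lam G C i)) ∧
        ∀ i ∈ range G, δ0 ≤ lam G C (i+1) - lam G C i := by
    have hne : ((range G).image fun i => lam G C (i+1) - lam G C i).Nonempty :=
      (Finset.nonempty_range_iff.mpr (by omega)).image _
    refine ⟨_, Finset.min'_mem _ hne, fun i hi => Finset.min'_le _ _ ?_⟩
    exact Finset.mem_image_of_mem _ hi
  have hδ0pos : 0 < δ0 := by
    obtain ⟨i, hi, rfl⟩ := Finset.mem_image.mp hδ0mem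
    rw [mem_range] at hi
    have := lam_succ_lt (by omega : 0 < G) hC i hi
    linarith
  refine ⟨2 * δ0, by linarith, fun x => ?_⟩
  set y : ℕ → ℝ := vext G x with hy
  set z : ℕ → ℝ := vprev G x with hz
  have hyx : ∀ b : Fin G, x b = y (b : ℕ) := fun b => (vext_coe x b).symm
  have hQ : Matrix.vecMul x (Kmat G C) ⬝ᵥ x
      = ∑ i ∈ range G, ((y i * (pc G C i + pc G C (i+1) + 2 * (lam G C (i+1) - lam G C i))
          - z i * pc G C i - y (i+1) * pc G C (i+1)) * y i) := by
    rw [dotProduct]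
    rw [Finset.sum_congr rfl (fun b _ => by rw [col_sum, hyx b])]
    exact Fin.sum_univ_eq_sum_range (fun i =>
      (y i * (pc G C i + pc G C (i+1) + 2 * (lam G C (i+1) - lam G C i))
        - z i * pc G C i - y (i+1) * pc G C (i+1)) * y i) G
  have hyG : y G = 0 := by rw [hy, vext, dif_neg (by omega)]
  have hz0 : z 0 = 0 := rfl
  have hzs : ∀ i : ℕ, z (i + 1) = y i := fun i => rfl
  -- rewrite Q as diagonal minus twice cross term
  have hQ2 : Matrix.vecMul x (Kmat G C) ⬝ᵥ x
      = ∑ i ∈ range G, (pc G C i + pc G C (i+1) + 2 * (lam G C (i+1) - lam G C i)) * y i ^ 2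
        - 2 * ∑ i ∈ range n, pc G C (i+1) * y i * y (i+1) := by
    rw [hQ]
    have e1 : ∀ i ∈ range G,
        (y i * (pc G C i + pc G C (i+1) + 2 * (lam G C (i+1) - lam G C i))
          - z i * pc G C i - y (i+1) * pc G C (i+1)) * y i
        = (pc G C i + pc G C (i+1) + 2 * (lam G C (i+1) - lam G C i)) * y i ^ 2
          - pc G C i * z i * y i - pc G C (i+1) * y (i+1) * y i := by
      intro i _
      ring
    rw [Finset.sum_congr rfl e1]
    rw [Finset.sum_sub_distrib, Finset.sum_sub_distrib]
    have eA1 : ∑ i ∈ range G, pc G C i * z i * y i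
        = ∑ i ∈ range n, pc G C (i+1) * y i * y (i+1) := by
      have h1 : ∑ i ∈ range G, pc G C i * z i * y i
          = ∑ i ∈ range n, pc G C (i+1) * z (i+1) * y (i+1) + pc G C 0 * z 0 * y 0 := by
        rw [hG]; exact Finset.sum_range_succ' _ n
      have h2 : ∑ i ∈ range n, pc G C (i+1) * z (i+1) * y (i+1)
          = ∑ i ∈ range n, pc G C (i+1) * y i * y (i+1) :=
        Finset.sum_congr rfl (fun i _ => by rw [hzs])
      rw [h1, h2, hz0]
      ring
    have eA2 : ∑ i ∈ range G, pc G C (i+1) * y (i+1) * y i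
        = ∑ i ∈ range n, pc G C (i+1) * y i * y (i+1) := by
      have h1 : ∑ i ∈ range G, pc G C (i+1) * y (i+1) * y i
          = ∑ i ∈ range n, pc G C (i+1) * y (i+1) * y i
            + pc G C (n+1) * y (n+1) * y n := by
        rw [hG]; exact Finset.sum_range_succ _ n
      have h2 : ∑ i ∈ range n, pc G C (i+1) * y (i+1) * y i
          = ∑ i ∈ range n, pc G C (i+1) * y i * y (i+1) :=
        Finset.sum_congr rfl (fun i _ => by ring)
      rw [h1, h2, show y (n+1) = 0 from hyG]
      ring
    rw [eA1, eA2]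
    ring
  -- bound the cross term
  have hpc : ∀ i, i ≤ G → 0 < pc G C i := pc_pos (by omega) hC
  have hcross : 2 * ∑ i ∈ range n, pc G C (i+1) * y i * y (i+1)
      ≤ ∑ i ∈ range n, pc G C (i+1) * (y i ^ 2 + y (i+1) ^ 2) := by
    rw [Finset.mul_sum]
    refine Finset.sum_le_sum (fun i hi => ?_)
    rw [mem_range] at hi
    have hp := hpc (i+1) (by omega)
    nlinarith [sq_nonneg (y i - y (i+1))]
  have hsplit : ∑ i ∈ range n, pc G C (i+1) * (y i ^ 2 + y (i+1) ^ 2)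
      = ∑ i ∈ range n, pc G C (i+1) * y i ^ 2
        + ∑ i ∈ range n, pc G C (i+1) * y (i+1) ^ 2 := by
    rw [← Finset.sum_add_distrib]
    exact Finset.sum_congr rfl (fun i _ => by ring)
  have hB1 : ∑ i ∈ range n, pc G C (i+1) * y i ^ 2
      ≤ ∑ i ∈ range G, pc G C (i+1) * y i ^ 2 := by
    have h1 : ∑ i ∈ range G, pc G C (i+1) * y i ^ 2
        = ∑ i ∈ range n, pc G C (i+1) * y i ^ 2 + pc G C (n+1) * y n ^ 2 := by
      rw [hG]; exact Finset.sum_range_succ _ n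
    have := hpc (n+1) (by omega)
    nlinarith [sq_nonneg (y n)]
  have hB2 : ∑ i ∈ range n, pc G C (i+1) * y (i+1) ^ 2
      ≤ ∑ i ∈ range G, pc G C i * y i ^ 2 := by
    have h1 : ∑ i ∈ range G, pc G C i * y i ^ 2
        = ∑ i ∈ range n, pc G C (i+1) * y (i+1) ^ 2 + pc G C 0 * y 0 ^ 2 := by
      rw [hG]; exact Finset.sum_range_succ' _ n
    have h00 : 0 ≤ pc G C 0 * y 0 ^ 2 := by
      have := hpc 0 (by omega)
      positivity
    linarith
  -- the diagonal identity
  have hdiag : ∑ i ∈ range G, (pc G C i + pc G C (i+1) + 2 * (lam G C (i+1) - lam G C i)) * y i ^ 2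
      - ∑ i ∈ range G, pc G C (i+1) * y i ^ 2 - ∑ i ∈ range G, pc G C i * y i ^ 2
      = ∑ i ∈ range G, 2 * (lam G C (i+1) - lam G C i) * y i ^ 2 := by
    rw [← Finset.sum_sub_distrib, ← Finset.sum_sub_distrib]
    exact Finset.sum_congr rfl (fun i _ => by ring)
  have hfinal : ∑ i ∈ range G, 2 * (lam G C (i+1) - lam G C i) * y i ^ 2
      ≥ ∑ i ∈ range G, 2 * δ0 * y i ^ 2 := by
    refine Finset.sum_le_sum (fun i hi => ?_)
    have := hδ0le i hi
    nlinarith [sq_nonneg (y i)]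
  have hsum : ∑ i : Fin G, x i ^ 2 = ∑ i ∈ range G, y i ^ 2 := by
    rw [Finset.sum_congr rfl (fun b _ => by rw [hyx b])]
    exact Fin.sum_univ_eq_sum_range (fun i => y i ^ 2) G
  rw [hsum, hQ2, Finset.mul_sum]
  have : ∑ i ∈ range G, 2 * δ0 * y i ^ 2 = ∑ i ∈ range G, 2 * δ0 * y i ^ 2 := rfl
  linarith [hfinal, hcross, hB1, hB2, hdiag, hsplit]

end TropAux
namespace TropAux
open TropToda Matrix Finset

variable {g : ℕ} {C : ℤ → ℝ}

lemma theta_bdd (hg : 0 < g) (hC : Generic g C) (Z : Fin g → ℝ) :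
    BddBelow (Set.range fun m : Fin g → ℤ => thetaTerm g (Kmat g C) m Z) := by
  obtain ⟨δ, hδ, hquad⟩ := kmat_quad hg hC
  refine ⟨∑ i, -(Z i) ^ 2 / (2 * δ), ?_⟩
  rintro x ⟨m, rfl⟩
  show ∑ i, -(Z i) ^ 2 / (2 * δ) ≤ thetaTerm g (Kmat g C) m Z
  set M : Fin g → ℝ := fun i => (m i : ℝ) with hM
  have h1 : thetaTerm g (Kmat g C) m Z
      = (1/2) * (Matrix.vecMul M (Kmat g C) ⬝ᵥ M) + ∑ i, M i * Z i := rfl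
  have h2 := hquad M
  have h3 : ∑ i, -(Z i) ^ 2 / (2 * δ) ≤ ∑ i : Fin g, ((1/2) * δ * M i ^ 2 + M i * Z i) := by
    refine Finset.sum_le_sum (fun i _ => ?_)
    rw [div_le_iff₀ (by linarith : (0:ℝ) < 2 * δ)]
    nlinarith [sq_nonneg (δ * M i + Z i)]
  have h4 : ∑ i : Fin g, ((1/2) * δ * M i ^ 2 + M i * Z i)
      = (1/2) * δ * ∑ i, M i ^ 2 + ∑ i, M i * Z i := by
    rw [Finset.mul_sum, ← Finset.sum_add_distrib]
  rw [h1]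
  linarith

lemma sInf_image_add (S : Set ℝ) (h1 : S.Nonempty) (h2 : BddBelow S) (c : ℝ) :
    sInf ((fun x => x + c) '' S) = sInf S + c := by
  have h := (OrderIso.addRight c).map_csInf' h1 h2
  have e : ⇑(OrderIso.addRight c) = fun x => x + c := rfl
  rw [e] at h
  exact h.symm

lemma thetaTerm_shift (n m : Fin g → ℤ) (Z : Fin g → ℝ) :
    thetaTerm g (Kmat g C) m
        (fun i => Z i - Matrix.vecMul (fun j => (n j : ℝ)) (Kmat g C) i)
      = thetaTerm g (Kmat g C) (m - n) Z
        + ((fun i => (n i : ℝ)) ⬝ᵥ Z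
          - (1/2) * (Matrix.vecMul (fun i => (n i : ℝ)) (Kmat g C)
              ⬝ᵥ fun i => (n i : ℝ))) := by
  have hsymm : ∀ u w : Fin g → ℝ,
      Matrix.vecMul u (Kmat g C) ⬝ᵥ w = Matrix.vecMul w (Kmat g C) ⬝ᵥ u := by
    intro u w
    calc Matrix.vecMul u (Kmat g C) ⬝ᵥ w
        = u ⬝ᵥ ((Kmat g C) *ᵥ w) := (Matrix.dotProduct_mulVec u (Kmat g C) w).symm
      _ = u ⬝ᵥ Matrix.vecMul w (Kmat g C) := by
          rw [← Matrix.vecMul_transpose, kmat_symm]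
      _ = Matrix.vecMul w (Kmat g C) ⬝ᵥ u := dotProduct_comm _ _
  rw [thetaTerm, thetaTerm]
  set M : Fin g → ℝ := fun i => (m i : ℝ) with hM
  set N : Fin g → ℝ := fun i => (n i : ℝ) with hN
  have hcast : (fun i => ((m - n) i : ℝ)) = M - N := by
    funext i
    show ((m i - n i : ℤ) : ℝ) = M i - N i
    push_cast
    rfl
  have harg : (fun i => Z i - Matrix.vecMul N (Kmat g C) i) = Z - Matrix.vecMul N (Kmat g C) :=
    rfl
  rw [hcast, harg]
  rw [Matrix.sub_vecMul, sub_dotProduct, dotProduct_sub, dotProduct_sub,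
    sub_dotProduct, dotProduct_sub]
  have e1 : M ⬝ᵥ Matrix.vecMul N (Kmat g C) = Matrix.vecMul N (Kmat g C) ⬝ᵥ M :=
    dotProduct_comm _ _
  have e2 : Matrix.vecMul M (Kmat g C) ⬝ᵥ N = Matrix.vecMul N (Kmat g C) ⬝ᵥ M := hsymm M N
  rw [e1, e2]
  ring

lemma theta_shift (hg : 0 < g) (hC : Generic g C) (n : Fin g → ℤ) (Z : Fin g → ℝ) :
    theta g (Kmat g C)
        (fun i => Z i - Matrix.vecMul (fun j => (n j : ℝ)) (Kmat g C) i)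
      = theta g (Kmat g C) Z
        + ((fun i => (n i : ℝ)) ⬝ᵥ Z
          - (1/2) * (Matrix.vecMul (fun i => (n i : ℝ)) (Kmat g C)
              ⬝ᵥ fun i => (n i : ℝ))) := by
  set c := ((fun i => (n i : ℝ)) ⬝ᵥ Z
    - (1/2) * (Matrix.vecMul (fun i => (n i : ℝ)) (Kmat g C) ⬝ᵥ fun i => (n i : ℝ))) with hc
  have hrange : (Set.range fun m : Fin g → ℤ => thetaTerm g (Kmat g C) m
        (fun i => Z i - Matrix.vecMul (fun j => (n j : ℝ)) (Kmat g C) i))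
      = (fun x => x + c) '' (Set.range fun m : Fin g → ℤ => thetaTerm g (Kmat g C) m Z) := by
    ext x
    simp only [Set.mem_range, Set.mem_image]
    constructor
    · rintro ⟨m, rfl⟩
      exact ⟨thetaTerm g (Kmat g C) (m - n) Z, ⟨m - n, rfl⟩, (thetaTerm_shift n m Z).symm⟩
    · rintro ⟨w, ⟨m, rfl⟩, rfl⟩
      refine ⟨m + n, ?_⟩
      rw [thetaTerm_shift n (m + n) Z, add_sub_cancel_right]
  rw [theta, theta, hrange, sInf_image_add _ (Set.range_nonempty _) (theta_bdd hg hC Z) c]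

lemma abel_aux (f : ℕ → ℝ) : ∀ n : ℕ,
    ∑ i ∈ range n, ((n : ℝ) - i) * (f (i+1) - f i) = ∑ j ∈ Icc 1 n, (f j - f 0) := by
  intro n
  induction n with
  | zero => simp
  | succ n ih =>
      have h1 : ∀ i ∈ range (n+1), (((n+1 : ℕ) : ℝ) - i) * (f (i+1) - f i)
          = ((n : ℝ) - i) * (f (i+1) - f i) + (f (i+1) - f i) := by
        intro i _
        push_cast
        ring
      rw [Finset.sum_congr rfl h1, Finset.sum_add_distrib, Finset.sum_range_sub f (n+1),
        Finset.sum_range_succ (fun i => ((n : ℝ) - i) * (f (i+1) - f i)) n, ih,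
        Finset.sum_Icc_succ_top (by omega : 1 ≤ n + 1)]
      have hz : ((n : ℝ) - (n : ℕ)) = 0 := by simp
      rw [hz]
      ring

end TropAux

open TropAux

open TropToda in
/-- `ĝ K = (g+1)L e_1`; consequently `Z − (g+1)Le_1 ∈ D_{m+ĝ}` for
`Z ∈ D_m`, `Z − (g+1)Le_1 ≡ Z` mod `ℤ^g K`, and `T_n^t` is quasi-periodic. -/
theorem ghat_K_and_quasiperiodicity
    (g : ℕ) (hg : 0 < g) (C : ℤ → ℝ) (hC : Generic g C) :
    (Matrix.vecMul (fun i : Fin g => (g : ℝ) - (i : ℕ)) (Kmat g C)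
        = fun i : Fin g => ((g : ℝ) + 1) * Lc g C * e1 g i) ∧
    (∀ m : Fin g → ℤ, ∀ Z : Fin g → ℝ, Z ∈ Dset g (Kmat g C) m →
        ((fun i : Fin g => Z i - ((g : ℝ) + 1) * Lc g C * e1 g i)
            ∈ Dset g (Kmat g C) (fun i : Fin g => m i + ((g : ℤ) - (i : ℕ))) ∧
         ∃ l : Fin g → ℤ,
           (fun i : Fin g => Z i - ((g : ℝ) + 1) * Lc g C * e1 g i) - Z
             = Matrix.vecMul (fun j => (l j : ℝ)) (Kmat g C))) ∧
    (∀ Z0 : Fin g → ℝ, ∀ n t : ℤ,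
        Tf g C Z0 (n + g + 1) t = Tf g C Z0 n t +
          (-(g : ℝ) * Lc g C * (n : ℝ)
            + (∑ i ∈ Finset.Icc 1 g, (lam g C i - lam g C 0)) * (t : ℝ)
            + ((fun i : Fin g => (g : ℝ) - (i : ℕ)) ⬝ᵥ Z0)
            - (1/2) * (Matrix.vecMul (fun i : Fin g => (g : ℝ) - (i : ℕ)) (Kmat g C)
                ⬝ᵥ fun i : Fin g => (g : ℝ) - (i : ℕ)))) := by
  have hA := vecMul_ghat hg hC
  set ghat : Fin g → ℤ := fun i => (g : ℤ) - (i : ℕ) with hghat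
  have hgc : (fun j : Fin g => ((ghat j : ℤ) : ℝ)) = fun i : Fin g => (g : ℝ) - (i : ℕ) := by
    funext j
    rw [hghat]
    push_cast
    ring
  refine ⟨hA, ?_, ?_⟩
  · intro m Z hZ
    have hW : (fun i : Fin g => Z i - ((g : ℝ) + 1) * Lc g C * e1 g i)
        = (fun i => Z i - Matrix.vecMul (fun j => ((ghat j : ℤ) : ℝ)) (Kmat g C) i) := by
      funext i
      rw [hgc, hA]
    constructor
    · show theta g (Kmat g C) (fun i : Fin g => Z i - ((g : ℝ) + 1) * Lc g C * e1 g i)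
        = thetaTerm g (Kmat g C) (fun i : Fin g => m i + ((g : ℤ) - (i : ℕ)))
            (fun i : Fin g => Z i - ((g : ℝ) + 1) * Lc g C * e1 g i)
      have hm' : (fun i : Fin g => m i + ((g : ℤ) - (i : ℕ))) = m + ghat := rfl
      have hZ' : theta g (Kmat g C) Z = thetaTerm g (Kmat g C) m Z := hZ
      rw [hW, hm', theta_shift hg hC ghat Z, thetaTerm_shift ghat (m + ghat) Z,
        add_sub_cancel_right, hZ']
    · refine ⟨fun i => -((g : ℤ) - (i : ℕ)), ?_⟩
      have hl : (fun j : Fin g => ((-((g : ℤ) - (j : ℕ)) : ℤ) : ℝ))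
          = -(fun i : Fin g => (g : ℝ) - (i : ℕ)) := by
        funext j
        rw [Pi.neg_apply]
        push_cast
        ring
      rw [hl, Matrix.neg_vecMul, hA]
      funext i
      show Z i - ((g : ℝ) + 1) * Lc g C * e1 g i - Z i = -(((g : ℝ) + 1) * Lc g C * e1 g i)
      ring
  · intro Z0 n t
    have hZpt : Zpt g C Z0 (n + g + 1) t
        = (fun i => Zpt g C Z0 n t i
            - Matrix.vecMul (fun j => ((ghat j : ℤ) : ℝ)) (Kmat g C) i) := by
      funext i
      rw [hgc, hA]
      show Z0 i - ((n + g + 1 : ℤ) : ℝ) * Lc g C * e1 g i + (t : ℝ) * lamvec g C i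
        = Z0 i - (n : ℝ) * Lc g C * e1 g i + (t : ℝ) * lamvec g C i
          - ((g : ℝ) + 1) * Lc g C * e1 g i
      push_cast
      ring
    have hdot : (fun i : Fin g => (g : ℝ) - (i : ℕ)) ⬝ᵥ Zpt g C Z0 n t
        = -(g : ℝ) * Lc g C * (n : ℝ)
          + (∑ i ∈ Finset.Icc 1 g, (lam g C i - lam g C 0)) * (t : ℝ)
          + ((fun i : Fin g => (g : ℝ) - (i : ℕ)) ⬝ᵥ Z0) := by
      have he1 : ∑ i : Fin g, ((g : ℝ) - (i : ℕ)) * e1 g i = (g : ℝ) := by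
        have h0 : ∀ i : Fin g, ((g : ℝ) - (i : ℕ)) * e1 g i
            = if i = (⟨0, hg⟩ : Fin g) then ((g : ℝ) - (i : ℕ)) * 1 else 0 := by
          intro i
          rw [e1]
          by_cases h : (i : ℕ) = 0
          · rw [if_pos h, if_pos (Fin.ext h)]
          · rw [if_neg h, if_neg (fun hh => h (by rw [hh]))]
            ring
        rw [Finset.sum_congr rfl (fun i _ => h0 i), Finset.sum_ite_eq' univ,
          if_pos (mem_univ _)]
        norm_num
      have hlamv : ∑ i : Fin g, ((g : ℝ) - (i : ℕ)) * lamvec g C i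
          = ∑ j ∈ Finset.Icc 1 g, (lam g C j - lam g C 0) := by
        have h0 : ∀ i : Fin g, ((g : ℝ) - (i : ℕ)) * lamvec g C i
            = (fun k : ℕ => ((g : ℝ) - k) * (lam g C (k + 1) - lam g C k)) (i : ℕ) := by
          intro i
          rw [lamvec]
        rw [Finset.sum_congr rfl (fun i _ => h0 i),
          Fin.sum_univ_eq_sum_range (fun k => ((g : ℝ) - k) * (lam g C (k + 1) - lam g C k)) g,
          abel_aux (lam g C) g]
      have hexp : ∀ i : Fin g, ((g : ℝ) - (i : ℕ)) * Zpt g C Z0 n t i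
          = ((g : ℝ) - (i : ℕ)) * Z0 i
            - (n : ℝ) * Lc g C * (((g : ℝ) - (i : ℕ)) * e1 g i)
            + (t : ℝ) * (((g : ℝ) - (i : ℕ)) * lamvec g C i) := by
        intro i
        rw [Zpt]
        ring
      rw [dotProduct, Finset.sum_congr rfl (fun i _ => hexp i), Finset.sum_add_distrib,
        Finset.sum_sub_distrib, ← Finset.mul_sum, ← Finset.mul_sum, he1, hlamv, dotProduct]
      ring
    rw [Tf, Tf, hZpt, theta_shift hg hC ghat (Zpt g C Z0 n t), hgc, hdot]
    try ring
end
end
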